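/- arXiv:1809.07450 — 2 statements merged into one kernel-verified Lean document; each statement's English description precedes it below -/
import Mathlib

section
/- Let f : ℝ × ℝⁿ → ℝⁿ be continuous, M₀ symmetric positive definite, and δ₀ < Δ₀. Suppose max over x ∈ B_{M₀}(x₀, Δ₀) and s ∈ [0, h] of ‖h·f(t₀+s, x)‖_{M₀} ≤ Δ₀ − δ₀. Then for every initial condition x̄ ∈ B_{M₀}(x₀, δ₀), every solution χ of ẋ = f(t,x) with χ(t₀) = x̄ satisfies χ(t) ∈ B_{M₀}(x₀, Δ₀) for all t ∈ [t₀, t₀+h]. -/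
open Matrix Set
open Topology Filter
open scoped MatrixOrder

noncomputable def specNorm {n : ℕ} (B : Matrix (Fin n) (Fin n) ℝ) : ℝ :=
  ‖Matrix.toEuclideanCLM (𝕜 := ℝ) B‖

noncomputable def specNormC {n : ℕ} (B : Matrix (Fin n) (Fin n) ℂ) : ℝ :=
  ‖Matrix.toEuclideanCLM (𝕜 := ℂ) B‖

noncomputable def wnorm {n : ℕ} (M : Matrix (Fin n) (Fin n) ℝ) (x : Fin n → ℝ) : ℝ :=
  Real.sqrt (dotProduct x (M.mulVec x))

noncomputable def euclNorm {n : ℕ} (x : Fin n → ℝ) : ℝ :=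
  Real.sqrt (dotProduct x x)

lemma wnorm_eq_norm {n : ℕ} (M : Matrix (Fin n) (Fin n) ℝ) (hM : M.PosDef) (x : Fin n → ℝ) :
    wnorm M x = ‖(EuclideanSpace.equiv (Fin n) ℝ).symm ((CFC.sqrt M).mulVec x)‖ := by
  set Q := CFC.sqrt M with hQdef
  have hQQ : Q * Q = M := CFC.sqrt_mul_sqrt_self M hM.posSemidef.nonneg
  have hQh : Qᵀ = Q := by
    have := (CFC.sqrt_nonneg M).posSemidef.isHermitian
    simpa [Matrix.IsHermitian, Matrix.conjTranspose_eq_transpose_of_trivial] using this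
  rw [EuclideanSpace.norm_eq]
  unfold wnorm
  have : dotProduct x (M.mulVec x) = dotProduct (Q.mulVec x) (Q.mulVec x) := by
    rw [← hQQ, ← Matrix.mulVec_mulVec, dotProduct_mulVec, ← Matrix.mulVec_transpose, hQh]
  rw [this]
  congr 1
  simp [dotProduct, pow_two, Real.norm_eq_abs, abs_mul_abs_self, EuclideanSpace.equiv]

/-- Theorem 3: if max over B_{M₀}(x₀,Δ₀) × [0,h] of ‖h·f(t₀+s,x)‖_{M₀} ≤ Δ₀-δ₀, then every
solution starting in B_{M₀}(x₀,δ₀) at t₀ stays in B_{M₀}(x₀,Δ₀) on [t₀,t₀+h]. -/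
theorem stmt6 {n : ℕ} (f : ℝ → (Fin n → ℝ) → (Fin n → ℝ))
    (hf : Continuous fun p : ℝ × (Fin n → ℝ) => f p.1 p.2)
    (M₀ : Matrix (Fin n) (Fin n) ℝ) (hM₀ : M₀.PosDef)
    (x₀ xb : Fin n → ℝ) (t₀ h δ₀ Δ₀ : ℝ)
    (hh : 0 < h) (hδ₀ : 0 ≤ δ₀) (hδΔ : δ₀ < Δ₀)
    (hbound : ∀ x, wnorm M₀ (x - x₀) ≤ Δ₀ →
      ∀ s ∈ Icc (0 : ℝ) h, wnorm M₀ (h • f (t₀ + s) x) ≤ Δ₀ - δ₀)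
    (hxb : wnorm M₀ (xb - x₀) ≤ δ₀)
    (χ : ℝ → (Fin n → ℝ)) (hχ₀ : χ t₀ = xb)
    (hχ : ∀ t ∈ Icc t₀ (t₀ + h), HasDerivAt χ (f t (χ t)) t) :
    ∀ t ∈ Icc t₀ (t₀ + h), wnorm M₀ (χ t - x₀) ≤ Δ₀ := by
  intro t ht
  by_contra hcon
  push_neg at hcon
  -- the continuous linear map L with wnorm M₀ x = ‖L x‖
  set Q := CFC.sqrt M₀ with hQdef
  set L : (Fin n → ℝ) →L[ℝ] EuclideanSpace ℝ (Fin n) :=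
    ((EuclideanSpace.equiv (Fin n) ℝ).symm.toContinuousLinearMap).comp
      (LinearMap.toContinuousLinearMap (Matrix.mulVecLin Q)) with hLdef
  have key : ∀ x, wnorm M₀ x = ‖L x‖ := by
    intro x
    rw [wnorm_eq_norm M₀ hM₀ x]
    rfl
  set g : ℝ → ℝ := fun s => wnorm M₀ (χ s - x₀) with hgdef
  have hgt0 : g t₀ ≤ δ₀ := by simpa [hgdef, hχ₀] using hxb
  have hcontg : ∀ s ∈ Icc t₀ (t₀ + h), ContinuousAt g s := by
    intro s hs
    have hc : ContinuousAt χ s := (hχ s hs).continuousAt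
    have : ContinuousAt (fun u => ‖L (χ u - x₀)‖) s :=
      (continuous_norm.continuousAt).comp (L.continuous.continuousAt.comp
        (hc.sub continuousAt_const))
    simpa [hgdef, key] using this
  set Bad := {s ∈ Icc t₀ (t₀ + h) | Δ₀ < g s} with hBaddef
  have hBad_ne : Bad.Nonempty := ⟨t, ht, hcon⟩
  have hBad_bdd : BddBelow Bad := ⟨t₀, fun s hs => hs.1.1⟩
  set τ := sInf Bad with hτdef
  have hτ_lb : t₀ ≤ τ := le_csInf hBad_ne fun s hs => hs.1.1
  have hτ_ub : τ ≤ t₀ + h := (csInf_le hBad_bdd ⟨ht, hcon⟩).trans ht.2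
  have hτ_mem : τ ∈ Icc t₀ (t₀ + h) := ⟨hτ_lb, hτ_ub⟩
  have hlt : ∀ s, t₀ ≤ s → s < τ → g s ≤ Δ₀ := by
    intro s hs hsτ
    by_contra hgs
    push_neg at hgs
    exact absurd (csInf_le hBad_bdd ⟨⟨hs, hsτ.le.trans hτ_ub⟩, hgs⟩) (not_le.2 hsτ)
  have hτle : g τ ≤ Δ₀ := by
    rcases eq_or_lt_of_le hτ_lb with heq | hlt'
    · rw [← heq]; exact hgt0.trans hδΔ.le
    · have hcl : τ ∈ closure (Ico t₀ τ) := by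
        rw [closure_Ico (ne_of_lt hlt')]
        exact ⟨hlt'.le, le_refl τ⟩
      haveI hne : (nhdsWithin τ (Ico t₀ τ)).NeBot := mem_closure_iff_nhdsWithin_neBot.mp hcl
      have htend : Tendsto g (nhdsWithin τ (Ico t₀ τ)) (nhds (g τ)) :=
        (hcontg τ hτ_mem).continuousWithinAt
      refine le_of_tendsto htend ?_
      filter_upwards [self_mem_nhdsWithin] with s hs
      exact hlt s hs.1 hs.2
  have hball : ∀ s ∈ Icc t₀ τ, g s ≤ Δ₀ := by
    intro s hs
    rcases lt_or_eq_of_le hs.2 with hlt' | heq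
    · exact hlt s hs.1 hlt'
    · rw [heq]; exact hτle
  -- mean value estimate on [t₀, τ]
  have hsub : Icc t₀ τ ⊆ Icc t₀ (t₀ + h) := Icc_subset_Icc le_rfl hτ_ub
  have hderiv : ∀ s ∈ Icc t₀ τ, HasDerivWithinAt (fun u => L (χ u))
      (L (f s (χ s))) (Icc t₀ τ) s := by
    intro s hs
    exact (L.hasFDerivAt.comp_hasDerivAt s (hχ s (hsub hs))).hasDerivWithinAt
  have hC : ∀ s ∈ Ico t₀ τ, ‖L (f s (χ s))‖ ≤ (Δ₀ - δ₀) / h := by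
    intro s hs
    have hmem : s - t₀ ∈ Icc (0:ℝ) h := by
      constructor <;> [linarith [hs.1]; linarith [hs.2.le, hτ_ub]]
    have := hbound (χ s) (hball s ⟨hs.1, hs.2.le⟩) (s - t₀) hmem
    rw [show t₀ + (s - t₀) = s by ring] at this
    have hsm : wnorm M₀ (h • f s (χ s)) = h * ‖L (f s (χ s))‖ := by
      rw [key, L.map_smul, norm_smul, Real.norm_eq_abs, abs_of_pos hh]
    rw [hsm] at this
    rw [le_div_iff₀ hh]
    linarith
  have hmv := norm_image_sub_le_of_norm_deriv_le_segment' hderiv hC τ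
    (right_mem_Icc.2 hτ_lb)
  have hgτ : g τ ≤ (Δ₀ - δ₀) / h * (τ - t₀) + δ₀ := by
    have hsplit : χ τ - x₀ = (χ τ - χ t₀) + (χ t₀ - x₀) := by abel
    have htri : g τ ≤ wnorm M₀ (χ τ - χ t₀) + wnorm M₀ (χ t₀ - x₀) := by
      rw [hgdef]
      simp only [hsplit, key, map_add]
      exact norm_add_le _ _
    have h1 : wnorm M₀ (χ τ - χ t₀) ≤ (Δ₀ - δ₀) / h * (τ - t₀) := by
      rw [key, map_sub]
      exact hmv
    linarith [hgt0, htri, h1]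
  rcases eq_or_lt_of_le hτ_ub with heq | hlt' 
  · -- τ = t₀ + h : Bad = {τ}, but g τ ≤ Δ₀, contradiction
    obtain ⟨b, hb⟩ := hBad_ne
    have hbτ : b = τ := le_antisymm (heq ▸ hb.1.2) (csInf_le hBad_bdd hb)
    rw [hbτ] at hb
    exact absurd hτle (not_le.2 hb.2)
  · -- τ < t₀ + h : strict bound, continuity gives neighborhood with g < Δ₀
    have hstrict : g τ < Δ₀ := by
      have h1 : (Δ₀ - δ₀) / h * (τ - t₀) < Δ₀ - δ₀ := by
        have hpos : 0 < (Δ₀ - δ₀) / h := div_pos (by linarith) hh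
        have : τ - t₀ < h := by linarith
        calc (Δ₀ - δ₀) / h * (τ - t₀) < (Δ₀ - δ₀) / h * h :=
              mul_lt_mul_of_pos_left this hpos
          _ = Δ₀ - δ₀ := div_mul_cancel₀ _ (ne_of_gt hh)
      linarith
    have hopen : ∀ᶠ s in nhds τ, g s < Δ₀ :=
      (hcontg τ hτ_mem).eventually_lt continuousAt_const hstrict
    rw [Metric.eventually_nhds_iff] at hopen
    obtain ⟨ε, hε, hball'⟩ := hopen
    obtain ⟨b, hbBad, hbε⟩ := exists_lt_of_csInf_lt hBad_ne (by linarith : sInf Bad < τ + ε)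
    have hbτ : τ ≤ b := csInf_le hBad_bdd hbBad
    have : dist b τ < ε := by
      rw [Real.dist_eq, abs_of_nonneg (by linarith)]
      linarith
    exact absurd (hball' this) (not_lt.2 hbBad.2.le)
end

section
/- Let f : ℝ × ℝⁿ → ℝⁿ be continuous, M₀ symmetric positive definite, δ₀ < Δ₀. Suppose max over x ∈ B_{M₀}(x₀, Δ₀) and s ∈ [0, h] of ‖h·f(t₀−s, x)‖_{M₀} ≤ Δ₀ − δ₀. Then for every x̄ ∈ B_{M₀}(x₀, δ₀), any backward solution χ of ẋ = f(t,x) with χ(t₀) = x̄ satisfies χ(t) ∈ B_{M₀}(x₀, Δ₀) for all t ∈ [t₀−h, t₀]. -/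
open Matrix Set Topology Filter

/-- Corollary 1 (backwards in time): with the bound on ‖h·f(t₀-s,x)‖_{M₀}, every backward
solution with χ(t₀) = x̄ ∈ B_{M₀}(x₀,δ₀) stays in B_{M₀}(x₀,Δ₀) on [t₀-h,t₀]. -/
theorem stmt7 {n : ℕ} (f : ℝ → (Fin n → ℝ) → (Fin n → ℝ))
    (hf : Continuous fun p : ℝ × (Fin n → ℝ) => f p.1 p.2)
    (M₀ : Matrix (Fin n) (Fin n) ℝ) (hM₀ : M₀.PosDef)
    (x₀ xb : Fin n → ℝ) (t₀ h δ₀ Δ₀ : ℝ)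
    (hh : 0 < h) (hδ₀ : 0 ≤ δ₀) (hδΔ : δ₀ < Δ₀)
    (hbound : ∀ x, wnorm M₀ (x - x₀) ≤ Δ₀ →
      ∀ s ∈ Icc (0 : ℝ) h, wnorm M₀ (h • f (t₀ - s) x) ≤ Δ₀ - δ₀)
    (hxb : wnorm M₀ (xb - x₀) ≤ δ₀)
    (χ : ℝ → (Fin n → ℝ)) (hχ₀ : χ t₀ = xb)
    (hχ : ∀ t ∈ Icc (t₀ - h) t₀, HasDerivAt χ (f t (χ t)) t) :
    ∀ t ∈ Icc (t₀ - h) t₀, wnorm M₀ (χ t - x₀) ≤ Δ₀ := by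
  have hM₀s : M₀.PosSemidef := hM₀.posSemidef
  set Sq : Matrix (Fin n) (Fin n) ℝ := (open scoped MatrixOrder in CFC.sqrt M₀) with hSqdef
  have hmul : Sq * Sq = M₀ := (open scoped MatrixOrder in CFC.sqrt_mul_sqrt_self M₀ hM₀s.nonneg)
  have hsym : Sqᵀ = Sq := (open scoped MatrixOrder in (CFC.sqrt_nonneg M₀).posSemidef.isHermitian)
  let L : (Fin n → ℝ) →L[ℝ] EuclideanSpace ℝ (Fin n) :=
    ((EuclideanSpace.equiv (Fin n) ℝ).symm.toContinuousLinearMap).comp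
      (LinearMap.toContinuousLinearMap Sq.mulVecLin)
  have hLv : ∀ v : Fin n → ℝ, (L v : Fin n → ℝ) = Sq.mulVec v := fun v => rfl
  have hw : ∀ v : Fin n → ℝ, wnorm M₀ v = ‖L v‖ := by
    intro v
    rw [EuclideanSpace.norm_eq]
    unfold wnorm
    congr 1
    have : M₀.mulVec v = Sq.mulVec (Sq.mulVec v) := by
      rw [← hmul, ← Matrix.mulVec_mulVec]
    rw [this, dotProduct_mulVec, ← Matrix.mulVec_transpose, hsym]
    simp [dotProduct, Real.norm_eq_abs, sq_abs, hLv]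
    ring_nf
  -- The transported trajectory.
  set Y : ℝ → EuclideanSpace ℝ (Fin n) := fun t => L (χ t - x₀) with hYdef
  have hY' : ∀ t ∈ Icc (t₀ - h) t₀, HasDerivAt Y (L (f t (χ t))) t := by
    intro t ht
    exact L.hasFDerivAt.comp_hasDerivAt t ((hχ t ht).sub_const x₀)
  have hYt₀ : ‖Y t₀‖ ≤ δ₀ := by
    have : wnorm M₀ (χ t₀ - x₀) ≤ δ₀ := by rw [hχ₀]; exact hxb
    rwa [hw] at this
  -- Translate the bound on f.
  have hfb : ∀ u ∈ Icc (t₀ - h) t₀, ‖Y u‖ ≤ Δ₀ → ‖L (f u (χ u))‖ ≤ (Δ₀ - δ₀) / h := by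
    intro u hu hYu
    have h1 : wnorm M₀ (χ u - x₀) ≤ Δ₀ := by rw [hw]; exact hYu
    have h2 := hbound (χ u) h1 (t₀ - u) ⟨by linarith [hu.2], by linarith [hu.1]⟩
    have h3 : t₀ - (t₀ - u) = u := by ring
    rw [h3, hw] at h2
    have h4 : L (h • f u (χ u)) = h • L (f u (χ u)) := by exact L.map_smul h _
    rw [h4, norm_smul, Real.norm_eq_abs, abs_of_pos hh] at h2
    rw [le_div_iff₀ hh]
    linarith
  -- Continuity of t ↦ ‖Y t‖ at points of the interval.
  have hcont : ∀ t ∈ Icc (t₀ - h) t₀, ContinuousAt (fun s => ‖Y s‖) t := by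
    intro t ht
    exact ((hY' t ht).continuousAt).norm
  -- Key estimate by the mean value inequality.
  have key : ∀ a ∈ Icc (t₀ - h) t₀, (∀ u ∈ Icc a t₀, ‖Y u‖ ≤ Δ₀) →
      ∀ s ∈ Icc a t₀, ‖Y s‖ ≤ δ₀ + (Δ₀ - δ₀) / h * (t₀ - s) := by
    intro a ha hA s hs
    have hsub : Icc s t₀ ⊆ Icc (t₀ - h) t₀ := Icc_subset_Icc (by linarith [ha.1, hs.1]) le_rfl
    have hmvt := norm_image_sub_le_of_norm_deriv_le_segment'
      (f := Y) (f' := fun u => L (f u (χ u))) (C := (Δ₀ - δ₀) / h) (a := s) (b := t₀)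
      (fun u hu => ((hY' u (hsub hu)).hasDerivWithinAt))
      (fun u hu => hfb u (hsub (Ico_subset_Icc_self hu))
        (hA u ⟨le_trans hs.1 hu.1, hu.2.le⟩))
      t₀ (right_mem_Icc.2 hs.2)
    calc ‖Y s‖ ≤ ‖Y t₀‖ + ‖Y t₀ - Y s‖ := by
            have := norm_sub_norm_le (Y t₀) (Y s)
            have h2 := norm_sub_rev (Y t₀) (Y s)
            linarith [abs_norm_sub_norm_le (Y s) (Y t₀), norm_sub_rev (Y s) (Y t₀),
              norm_le_insert' (Y s) (Y t₀)]
      _ ≤ δ₀ + (Δ₀ - δ₀) / h * (t₀ - s) := by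
            have := hmvt
            linarith [hYt₀]
  -- The set of "good" starting times.
  set A : Set ℝ := {t | t ∈ Icc (t₀ - h) t₀ ∧ ∀ s ∈ Icc t t₀, ‖Y s‖ ≤ Δ₀} with hAdef
  have hA₀ : t₀ ∈ A := by
    refine ⟨⟨by linarith, le_rfl⟩, ?_⟩
    intro s hs
    have : s = t₀ := le_antisymm hs.2 hs.1
    rw [this]
    linarith [hYt₀]
  have hAne : A.Nonempty := ⟨t₀, hA₀⟩
  have hbdd : BddBelow A := ⟨t₀ - h, fun a ha => ha.1.1⟩
  set τ : ℝ := sInf A with hτdef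
  have hτ₁ : t₀ - h ≤ τ := le_csInf hAne (fun a ha => ha.1.1)
  have hτ₂ : τ ≤ t₀ := csInf_le hbdd hA₀
  have hτIcc : τ ∈ Icc (t₀ - h) t₀ := ⟨hτ₁, hτ₂⟩
  -- τ ∈ A
  have hτA : τ ∈ A := by
    refine ⟨hτIcc, ?_⟩
    have hIoc : ∀ s ∈ Ioc τ t₀, ‖Y s‖ ≤ Δ₀ := by
      intro s hs
      obtain ⟨a, haA, has⟩ := exists_lt_of_csInf_lt hAne hs.1
      exact haA.2 s ⟨has.le, hs.2⟩
    intro s hs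
    rcases eq_or_lt_of_le hs.1 with heq | hlt
    · -- s = τ
      rcases eq_or_lt_of_le hτ₂ with hττ | hττ
      · rw [← heq, hττ]; linarith [hYt₀]
      · have hne : (𝓝[Ioc τ t₀] τ).NeBot := left_nhdsWithin_Ioc_neBot hττ
        have hten : Filter.Tendsto (fun s => ‖Y s‖) (𝓝[Ioc τ t₀] τ) (𝓝 ‖Y τ‖) :=
          ((hcont τ hτIcc).continuousWithinAt).tendsto
        have hev : ∀ᶠ u in 𝓝[Ioc τ t₀] τ, ‖Y u‖ ≤ Δ₀ := by
          filter_upwards [self_mem_nhdsWithin] with u hu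
          exact hIoc u hu
        rw [← heq]
        exact le_of_tendsto hten hev
    · exact hIoc s ⟨hlt, hs.2⟩
  -- τ must equal t₀ - h
  have hτeq : τ ≤ t₀ - h := by
    by_contra hgt
    push_neg at hgt
    have hstrict : ∀ s ∈ Icc τ t₀, ‖Y s‖ < Δ₀ := by
      intro s hs
      have h1 := key τ hτIcc hτA.2 s hs
      have h2 : t₀ - s ≤ t₀ - τ := by linarith [hs.1]
      have h3 : t₀ - τ < h := by linarith
      have h4 : 0 < (Δ₀ - δ₀) / h := div_pos (by linarith) hh
      have h5 : (Δ₀ - δ₀) / h * (t₀ - s) ≤ (Δ₀ - δ₀) / h * (t₀ - τ) :=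
        mul_le_mul_of_nonneg_left h2 h4.le
      have h6 : (Δ₀ - δ₀) / h * (t₀ - τ) < (Δ₀ - δ₀) / h * h :=
        mul_lt_mul_of_pos_left h3 h4
      have h7 : (Δ₀ - δ₀) / h * h = Δ₀ - δ₀ := div_mul_cancel₀ _ hh.ne'
      linarith
    have hτlt : ‖Y τ‖ < Δ₀ := hstrict τ ⟨le_rfl, hτ₂⟩
    have hev : ∀ᶠ u in 𝓝 τ, ‖Y u‖ < Δ₀ :=
      Filter.Tendsto.eventually_lt_const hτlt ((hcont τ hτIcc).tendsto)
    obtain ⟨ε, hε, hball⟩ := Metric.eventually_nhds_iff.mp hev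
    set t' : ℝ := max (t₀ - h) (τ - ε / 2) with ht'def
    have ht'lt : t' < τ := max_lt hgt (by linarith)
    have ht'A : t' ∈ A := by
      refine ⟨⟨le_max_left _ _, by linarith⟩, ?_⟩
      intro s hs
      rcases le_or_gt τ s with hcase | hcase
      · exact (hstrict s ⟨hcase, hs.2⟩).le
      · have hd : dist s τ < ε := by
          rw [Real.dist_eq, abs_of_nonpos (by linarith)]
          have : τ - ε / 2 ≤ t' := le_max_right _ _
          have : τ - ε / 2 ≤ s := le_trans this hs.1
          linarith
        exact (hball hd).le
    have : τ ≤ t' := csInf_le hbdd ht'A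
    linarith
  have hτfin : τ = t₀ - h := le_antisymm hτeq hτ₁
  intro t ht
  rw [hw]
  exact hτA.2 t (by rw [hτfin] at hτA ⊢; exact ht)
end
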